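/- Consider the consensus-voting group process on a convex compact set K ⊆ ℝ² with vol(K) = 1. Let f : K × K → [0,∞) be a measurable function satisfying f(w₁,w₂) ≤ min_{i∈{1,2}} vol(E_K(Hᵢ(w₁,w₂), H₍₃₋ᵢ₎(w₁,w₂))) for all w₁ ≠ w₂ in K (i.e. f lower-bounds, for each i, the one-round probability of accepting a candidate inside the Voronoi cell Hᵢ given that the convex hull of the group equals the opposite cell H₍₃₋ᵢ₎). Then for every t ≥ 1, Pr[X^{t+1}] ≤ 2 ∫_K ∫_K e^{−t·f(w₁,w₂)} dw₁ dw₂. -/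

import Mathlib

open MeasureTheory Metric Set
open scoped RealInnerProductSpace

noncomputable section

/-- Points of the plane (with the Euclidean norm). -/
abbrev Pt : Type := EuclideanSpace ℝ (Fin 2)

/-- The Voronoi cell of `w₁` (against competitor `w₂`) inside `K`. -/
def vcell (K : Set Pt) (w₁ w₂ : Pt) : Set Pt := {v ∈ K | dist v w₁ ≤ dist v w₂}

/-- The acceptance event `E_K(H, A)`: the set of candidate pairs `(w₁, w₂) ∈ K × K` such
that some candidate `wᵢ` lies in `H` and `A` is contained in its Voronoi cell, i.e. a
candidate inside `H` is accepted when the convex hull of the group is `A`. -/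
def accEvent (K H A : Set Pt) : Set (Pt × Pt) :=
  {p | p.1 ∈ K ∧ p.2 ∈ K ∧
    ((p.1 ∈ H ∧ A ⊆ vcell K p.1 p.2) ∨ (p.2 ∈ H ∧ A ⊆ vcell K p.2 p.1))}

/-- Every group member weakly prefers candidate `w₁` to candidate `w₂`. -/
def Accepts (G : Set Pt) (w₁ w₂ : Pt) : Prop := ∀ v ∈ G, dist v w₁ ≤ dist v w₂

open Classical in
/-- One round of the consensus-voting process: given the current group `G` and a pair of
candidates `c = (w₁, w₂)`, the unanimously preferred candidate (if any) joins the group. -/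
def step (G : Set Pt) (c : Pt × Pt) : Set Pt :=
  if Accepts G c.1 c.2 then insert c.1 G
  else if Accepts G c.2 c.1 then insert c.2 G
  else G

/-- The group after `t` rounds, from initial members `init` and candidate pairs `c`. -/
def grp {k : ℕ} (init : Fin k → Pt) (c : ℕ → Pt × Pt) : ℕ → Set Pt
  | 0 => Set.range init
  | t + 1 => step (grp init c t) (c t)

/-- Extend a `Fin T`-indexed sequence of candidate pairs to an `ℕ`-indexed one. -/
def extSeq {T : ℕ} (c : Fin T → Pt × Pt) : ℕ → Pt × Pt :=
  fun n => if h : n < T then c ⟨n, h⟩ else 0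

/-- The law of the randomness driving the first `T` rounds of the process: `k` i.i.d.
initial members with law `μ`, and `T` i.i.d. candidate pairs, each pair being two i.i.d.
points with law `μ`. -/
def procMeasure (μ : Measure Pt) (k T : ℕ) :
    Measure ((Fin k → Pt) × (Fin T → Pt × Pt)) :=
  (Measure.pi fun _ => μ).prod (Measure.pi fun _ => μ.prod μ)

/-! ### Auxiliary definitions and lemmas -/

abbrev PP : Type := Pt × Pt

instance : OpensMeasurableSpace (PP × PP) :=
  @Prod.opensMeasurableSpace PP PP _ _ _ _ inferInstance inferInstance inferInstance

/-- Strict acceptance into the cell of `p.2`, given that the hull is contained in the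
cell of `p.1`: some candidate lies in the cell of `p.2`, strictly outside the cell of
`p.1`, and beats the other candidate everywhere on the cell of `p.1`. -/
def sAcc (K : Set Pt) (p : PP) : Set PP :=
  {q | q.1 ∈ K ∧ q.2 ∈ K ∧
    ((q.1 ∈ vcell K p.2 p.1 ∧ q.1 ∉ vcell K p.1 p.2 ∧
        ∀ v ∈ K, dist v p.1 ≤ dist v p.2 → dist v q.1 ≤ dist v q.2) ∨
     (q.2 ∈ vcell K p.2 p.1 ∧ q.2 ∉ vcell K p.1 p.2 ∧
        ∀ v ∈ K, dist v p.1 ≤ dist v p.2 → dist v q.2 ≤ dist v q.1))}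

lemma step_subset (G : Set Pt) (q : Pt × Pt) : G ⊆ step G q := by
  unfold step; split_ifs
  · exact subset_insert _ _
  · exact subset_insert _ _
  · exact subset_rfl

lemma grp_mono {k : ℕ} (a : Fin k → Pt) (c : ℕ → Pt × Pt) : Monotone (grp a c) :=
  monotone_nat_of_le_succ fun n => step_subset (grp a c n) (c n)

lemma grp_subset {k : ℕ} (K : Set Pt) (a : Fin k → Pt) (c : ℕ → Pt × Pt)
    (ha : ∀ i, a i ∈ K) :
    ∀ s, (∀ n, n < s → (c n).1 ∈ K ∧ (c n).2 ∈ K) → grp a c s ⊆ K := by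
  intro s
  induction s with
  | zero => rintro _ v ⟨i, rfl⟩; exact ha i
  | succ n ih =>
    intro hc
    have hn := ih fun m hm => hc m (hm.trans (Nat.lt_succ_self n))
    have hpair := hc n (Nat.lt_succ_self n)
    show step (grp a c n) (c n) ⊆ K
    unfold step; split_ifs
    · exact insert_subset hpair.1 hn
    · exact insert_subset hpair.2 hn
    · exact hn

/-- The combinatorial core: if the group at time `t` unanimously accepts `w₁` over `w₂`,
then no earlier candidate pair realized the strict acceptance event into the opposite
cell, except possibly when the first initial member is equidistant from the pair. -/
lemma claimA {k : ℕ} (K : Set Pt) (a : Fin k → Pt) (c : ℕ → Pt × Pt) (t : ℕ)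
    (ha : ∀ i, a i ∈ K) (hc : ∀ n, n < t → (c n).1 ∈ K ∧ (c n).2 ∈ K)
    (w₁ w₂ : Pt) (hAcc : Accepts (grp a c t) w₁ w₂) (i₀ : Fin k) :
    ∀ s, s < t → c s ∉ sAcc K (w₁, w₂) ∨ dist (a i₀) (c s).1 = dist (a i₀) (c s).2 := by
  have hgK : grp a c t ⊆ K := grp_subset K a c ha t hc
  have hsub : ∀ v ∈ grp a c t, v ∈ K ∧ dist v w₁ ≤ dist v w₂ :=
    fun v hv => ⟨hgK hv, hAcc v hv⟩
  intro s hs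
  by_contra hcon
  push_neg at hcon
  obtain ⟨hE, hne⟩ := hcon
  obtain ⟨hq1K, hq2K, hor⟩ := hE
  have hmono : grp a c (s + 1) ⊆ grp a c t := grp_mono a c (Nat.succ_le_of_lt hs)
  have hmono' : grp a c s ⊆ grp a c t := grp_mono a c hs.le
  have hstep : grp a c (s + 1) = step (grp a c s) (c s) := rfl
  have ha0 : a i₀ ∈ grp a c s :=
    grp_mono a c (Nat.zero_le s) (mem_range_self i₀)
  rcases hor with ⟨h1, h1n, hall⟩ | ⟨h2, h2n, hall⟩
  · have hA : Accepts (grp a c s) (c s).1 (c s).2 := fun v hv =>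
      hall v (hsub v (hmono' hv)).1 (hsub v (hmono' hv)).2
    have hmem : (c s).1 ∈ grp a c (s + 1) := by
      rw [hstep]; unfold step; rw [if_pos hA]; exact mem_insert _ _
    have h := hsub _ (hmono hmem)
    exact h1n ⟨h.1, h.2⟩
  · have hA2 : Accepts (grp a c s) (c s).2 (c s).1 := fun v hv =>
      hall v (hsub v (hmono' hv)).1 (hsub v (hmono' hv)).2
    have hnA1 : ¬ Accepts (grp a c s) (c s).1 (c s).2 := by
      intro hA1
      have e1 := hA1 _ ha0
      have ha0' := hsub _ (hmono' ha0)
      have e2 : dist (a i₀) (c s).2 ≤ dist (a i₀) (c s).1 := hall _ ha0'.1 ha0'.2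
      exact hne (le_antisymm e1 e2)
    have hmem : (c s).2 ∈ grp a c (s + 1) := by
      rw [hstep]; unfold step; rw [if_neg hnA1, if_pos hA2]; exact mem_insert _ _
    have h := hsub _ (hmono hmem)
    exact h2n ⟨h.1, h.2⟩

lemma isClosed_aux {α : Type*} [TopologicalSpace α] (K : Set Pt) (hKc : IsCompact K)
    (g₁ g₂ g₃ g₄ : α → Pt) (h₁ : Continuous g₁) (h₂ : Continuous g₂)
    (h₃ : Continuous g₃) (h₄ : Continuous g₄) (r : ℝ) :
    IsClosed {x : α | ∃ v ∈ K, dist v (g₁ x) ≤ dist v (g₂ x) ∧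
      dist v (g₄ x) + r ≤ dist v (g₃ x)} := by
  haveI : CompactSpace K := isCompact_iff_compactSpace.mp hKc
  have hT : IsClosed {y : K × α | dist (y.1 : Pt) (g₁ y.2) ≤ dist (y.1 : Pt) (g₂ y.2) ∧
      dist (y.1 : Pt) (g₄ y.2) + r ≤ dist (y.1 : Pt) (g₃ y.2)} := by
    have hc : Continuous fun y : K × α => (y.1 : Pt) := continuous_subtype_val.comp continuous_fst
    exact IsClosed.inter
      (isClosed_le (hc.dist (h₁.comp continuous_snd)) (hc.dist (h₂.comp continuous_snd)))
      (isClosed_le ((hc.dist (h₄.comp continuous_snd)).add continuous_const)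
        (hc.dist (h₃.comp continuous_snd)))
  have himg := isClosedMap_snd_of_compactSpace _ hT
  convert himg using 1
  ext x
  constructor
  · rintro ⟨v, hv, h⟩; exact ⟨(⟨v, hv⟩, x), h, rfl⟩
  · rintro ⟨⟨⟨v, hv⟩, x'⟩, h, rfl⟩; exact ⟨v, hv, h⟩

lemma measurableSet_subCond {α : Type*} [TopologicalSpace α] [MeasurableSpace α]
    [OpensMeasurableSpace α] (K : Set Pt) (hKc : IsCompact K)
    (g₁ g₂ g₃ g₄ : α → Pt) (h₁ : Continuous g₁) (h₂ : Continuous g₂)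
    (h₃ : Continuous g₃) (h₄ : Continuous g₄) :
    MeasurableSet {x : α | ∀ v ∈ K, dist v (g₁ x) ≤ dist v (g₂ x) →
      dist v (g₃ x) ≤ dist v (g₄ x)} := by
  rw [← MeasurableSet.compl_iff]
  have hco : {x : α | ∀ v ∈ K, dist v (g₁ x) ≤ dist v (g₂ x) → dist v (g₃ x) ≤ dist v (g₄ x)}ᶜ
      = ⋃ n : ℕ, {x : α | ∃ v ∈ K, dist v (g₁ x) ≤ dist v (g₂ x) ∧
          dist v (g₄ x) + 1 / ((n : ℝ) + 1) ≤ dist v (g₃ x)} := by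
    ext x
    simp only [mem_compl_iff, mem_setOf_eq, mem_iUnion, not_forall]
    constructor
    · rintro ⟨v, hv, hle, hlt⟩
      obtain ⟨n, hn⟩ := exists_nat_one_div_lt (sub_pos.2 (lt_of_not_ge hlt))
      exact ⟨n, v, hv, hle, by linarith⟩
    · rintro ⟨n, v, hv, hle, h⟩
      have hpos : 0 < 1 / ((n : ℝ) + 1) := by positivity
      exact ⟨v, hv, hle, by intro hc; linarith⟩
  rw [hco]
  exact MeasurableSet.iUnion fun n =>
    (isClosed_aux K hKc g₁ g₂ g₃ g₄ h₁ h₂ h₃ h₄ _).measurableSet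

lemma measurableSet_sAcc_joint (K : Set Pt) (hKc : IsCompact K) :
    MeasurableSet {x : PP × PP | x.2 ∈ sAcc K x.1} := by
  have hKm : MeasurableSet K := hKc.isClosed.measurableSet
  have m21 : Measurable fun x : PP × PP => x.2.1 := measurable_snd.fst
  have m22 : Measurable fun x : PP × PP => x.2.2 := measurable_snd.snd
  have c21 : Continuous fun x : PP × PP => x.2.1 := continuous_snd.fst
  have c22 : Continuous fun x : PP × PP => x.2.2 := continuous_snd.snd
  have c11 : Continuous fun x : PP × PP => x.1.1 := continuous_fst.fst
  have c12 : Continuous fun x : PP × PP => x.1.2 := continuous_fst.snd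
  have hvc : ∀ (g : PP × PP → Pt), Continuous g → ∀ (h₁ h₂ : PP × PP → Pt),
      Continuous h₁ → Continuous h₂ →
      MeasurableSet {x : PP × PP | g x ∈ vcell K (h₁ x) (h₂ x)} := by
    intro g hg h₁ h₂ hh₁ hh₂
    have he : {x : PP × PP | g x ∈ vcell K (h₁ x) (h₂ x)}
        = {x | g x ∈ K} ∩ {x | dist (g x) (h₁ x) ≤ dist (g x) (h₂ x)} := rfl
    rw [he]
    exact (hKm.preimage hg.measurable).inter
      (measurableSet_le (hg.dist hh₁).measurable (hg.dist hh₂).measurable)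
  have hs : {x : PP × PP | x.2 ∈ sAcc K x.1}
      = ({x | x.2.1 ∈ K} ∩ ({x | x.2.2 ∈ K} ∩
        (({x : PP × PP | x.2.1 ∈ vcell K x.1.2 x.1.1} ∩ ({x | x.2.1 ∈ vcell K x.1.1 x.1.2}ᶜ ∩
            {x | ∀ v ∈ K, dist v x.1.1 ≤ dist v x.1.2 → dist v x.2.1 ≤ dist v x.2.2})) ∪
         ({x : PP × PP | x.2.2 ∈ vcell K x.1.2 x.1.1} ∩ ({x | x.2.2 ∈ vcell K x.1.1 x.1.2}ᶜ ∩
            {x | ∀ v ∈ K, dist v x.1.1 ≤ dist v x.1.2 → dist v x.2.2 ≤ dist v x.2.1}))))) := by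
    ext x
    simp only [sAcc, mem_setOf_eq, mem_inter_iff, mem_union, mem_compl_iff]
  rw [hs]
  refine (hKm.preimage m21).inter ((hKm.preimage m22).inter (MeasurableSet.union ?_ ?_))
  · exact (hvc _ c21 _ _ c12 c11).inter ((hvc _ c21 _ _ c11 c12).compl.inter
      (measurableSet_subCond K hKc _ _ _ _ c11 c12 c21 c22))
  · exact (hvc _ c22 _ _ c12 c11).inter ((hvc _ c22 _ _ c11 c12).compl.inter
      (measurableSet_subCond K hKc _ _ _ _ c11 c12 c22 c21))

lemma bisect_null {p : PP} (h : p.1 ≠ p.2) :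
    volume {v : Pt | dist v p.1 = dist v p.2} = 0 := by
  have hset : {v : Pt | dist v p.1 = dist v p.2}
      = (AffineSubspace.perpBisector p.1 p.2 : Set Pt) := by
    ext v
    simp [AffineSubspace.mem_perpBisector_iff_dist_eq]
  rw [hset]
  refine Measure.addHaar_affineSubspace _ _ fun htop => h ?_
  have hmem : p.1 ∈ AffineSubspace.perpBisector p.1 p.2 := by
    rw [htop]; exact AffineSubspace.mem_top ℝ Pt p.1
  have h2 := AffineSubspace.mem_perpBisector_iff_dist_eq.mp hmem
  have h0 : dist p.1 p.2 = 0 := by simpa [dist_self] using h2.symm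
  exact dist_eq_zero.mp h0

lemma sAcc_subset_prod (K : Set Pt) (p : PP) : sAcc K p ⊆ K ×ˢ K :=
  fun q hq => ⟨hq.1, hq.2.1⟩

lemma acc_le_sAcc (K : Set Pt) (p : PP) (hne : p.1 ≠ p.2)
    (hmeas : MeasurableSet (sAcc K p)) :
    volume (accEvent K (vcell K p.2 p.1) (vcell K p.1 p.2))
      ≤ ((volume.restrict K).prod (volume.restrict K)) (sAcc K p) := by
  have hsub : accEvent K (vcell K p.2 p.1) (vcell K p.1 p.2) ⊆
      sAcc K p ∪ ({v : Pt | dist v p.1 = dist v p.2} ×ˢ (univ : Set Pt) ∪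
        (univ : Set Pt) ×ˢ {v : Pt | dist v p.1 = dist v p.2}) := by
    rintro q ⟨h1, h2, hor⟩
    rcases hor with ⟨hm, hsc⟩ | ⟨hm, hsc⟩
    · by_cases hq1 : q.1 ∈ vcell K p.1 p.2
      · exact Or.inr (Or.inl ⟨le_antisymm hq1.2 hm.2, mem_univ _⟩)
      · exact Or.inl ⟨h1, h2, Or.inl ⟨hm, hq1, fun v hvK hvd => (hsc ⟨hvK, hvd⟩).2⟩⟩
    · by_cases hq2 : q.2 ∈ vcell K p.1 p.2
      · exact Or.inr (Or.inr ⟨mem_univ _, le_antisymm hq2.2 hm.2⟩)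
      · exact Or.inl ⟨h1, h2, Or.inr ⟨hm, hq2, fun v hvK hvd => (hsc ⟨hvK, hvd⟩).2⟩⟩
  have hb1 : volume ({v : Pt | dist v p.1 = dist v p.2} ×ˢ (univ : Set Pt)) = 0 := by
    rw [Measure.volume_eq_prod, Measure.prod_prod, bisect_null hne, zero_mul]
  have hb2 : volume ((univ : Set Pt) ×ˢ {v : Pt | dist v p.1 = dist v p.2}) = 0 := by
    rw [Measure.volume_eq_prod, Measure.prod_prod, bisect_null hne, mul_zero]
  have hres : ((volume.restrict K).prod (volume.restrict K)) (sAcc K p)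
      = volume (sAcc K p) := by
    rw [Measure.prod_restrict, ← Measure.volume_eq_prod, Measure.restrict_apply hmeas,
      inter_eq_self_of_subset_left (sAcc_subset_prod K p)]
  calc volume (accEvent K (vcell K p.2 p.1) (vcell K p.1 p.2))
      ≤ volume (sAcc K p ∪ _) := measure_mono hsub
    _ ≤ volume (sAcc K p) + volume ({v : Pt | dist v p.1 = dist v p.2} ×ˢ (univ : Set Pt) ∪
          (univ : Set Pt) ×ˢ {v : Pt | dist v p.1 = dist v p.2}) := measure_union_le _ _
    _ = volume (sAcc K p) := by rw [measure_union_null hb1 hb2, add_zero]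
    _ = _ := hres.symm

lemma nu_bis_null (K : Set Pt) (v₀ : Pt) :
    ((volume.restrict K).prod (volume.restrict K))
      {q : PP | dist v₀ q.1 = dist v₀ q.2} = 0 := by
  have hm : MeasurableSet {q : PP | dist v₀ q.1 = dist v₀ q.2} :=
    (isClosed_eq (continuous_const.dist continuous_fst)
      (continuous_const.dist continuous_snd)).measurableSet
  rw [Measure.prod_apply hm]
  have h0 : ∀ x : Pt, (volume.restrict K)
      (Prod.mk x ⁻¹' {q : PP | dist v₀ q.1 = dist v₀ q.2}) = 0 := by
    intro x
    have hsphere : volume (sphere v₀ (dist v₀ x)) = 0 :=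
      Measure.addHaar_sphere volume _ _
    have hle : (volume.restrict K) (sphere v₀ (dist v₀ x)) = 0 :=
      le_antisymm (le_trans (Measure.restrict_apply_le _ _) hsphere.le) zero_le
    refine measure_mono_null (fun y hy => ?_) hle
    have hy' : dist v₀ x = dist v₀ y := hy
    show dist y v₀ = dist v₀ x
    rw [dist_comm]; exact hy'.symm
  simp only [h0, lintegral_zero]

lemma nu_diag_null (K : Set Pt) :
    ((volume.restrict K).prod (volume.restrict K)) {q : PP | q.1 = q.2} = 0 := by
  have hm : MeasurableSet {q : PP | q.1 = q.2} :=
    (isClosed_eq continuous_fst continuous_snd).measurableSet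
  rw [Measure.prod_apply hm]
  have h0 : ∀ x : Pt, (volume.restrict K) (Prod.mk x ⁻¹' {q : PP | q.1 = q.2}) = 0 := by
    intro x
    have hsing : volume ({x} : Set Pt) = 0 := by
      have := Measure.addHaar_sphere (volume : Measure Pt) x 0
      simpa using this
    have hle : (volume.restrict K) ({x} : Set Pt) = 0 :=
      le_antisymm (le_trans (Measure.restrict_apply_le _ _) hsing.le) zero_le
    refine measure_mono_null (fun y hy => ?_) hle
    have hxy : x = y := hy
    simp [hxy.symm]
  simp only [h0, lintegral_zero]

lemma pi_null {ι : Type*} [Fintype ι] {X : Type*} [MeasurableSpace X] (m : Measure X)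
    [IsProbabilityMeasure m] {s : Set X} (h0 : m s = 0) (i : ι) :
    Measure.pi (fun _ : ι => m) {a : ι → X | a i ∈ s} = 0 := by
  classical
  have hset : {a : ι → X | a i ∈ s} = Set.pi univ (fun j => if j = i then s else univ) := by
    ext a
    simp only [mem_setOf_eq, Set.mem_pi, mem_univ, forall_true_left]
    constructor
    · intro h j
      by_cases hj : j = i
      · subst hj; simpa using h
      · simp [hj]
    · intro h
      have := h i
      simpa using this
  rw [hset, Measure.pi_pi]
  exact Finset.prod_eq_zero (Finset.mem_univ i) (by simp [h0])

lemma extSeq_castSucc {t : ℕ} (c : Fin (t + 1) → PP) (s : Fin t) :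
    extSeq c ↑s = c s.castSucc := by
  have h : (s : ℕ) < t + 1 := Nat.lt_succ_of_lt s.isLt
  have he : extSeq c ↑s = c ⟨↑s, h⟩ := dif_pos h
  rw [he]
  exact congrArg c (Fin.ext rfl)

lemma extSeq_last {t : ℕ} (c : Fin (t + 1) → PP) :
    extSeq c t = c (Fin.last t) := by
  have h : t < t + 1 := Nat.lt_succ_self t
  have he : extSeq c t = c ⟨t, h⟩ := dif_pos h
  rw [he]
  exact congrArg c (Fin.ext rfl)

/-- The key measure estimate: the probability that every one of the first `t` rounds
avoids the strict acceptance event determined by the last candidate pair (except on a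
bisector degeneracy) is bounded by the integral of `exp (-t f)`. -/
lemma key_bound (K : Set Pt) (hKc : IsCompact K) (hKvol : volume K = 1)
    (f : PP → ℝ) (hfnonneg : ∀ p, 0 ≤ f p)
    {k t : ℕ} (i₀ : Fin k) (pm : PP → PP)
    (hjm : MeasurableSet {x : PP × PP | x.2 ∈ sAcc K (pm x.1)})
    (hb : ∀ᵐ p ∂((volume.restrict K).prod (volume.restrict K)),
      ENNReal.ofReal (f p) ≤ ((volume.restrict K).prod (volume.restrict K)) (sAcc K (pm p))) :
    procMeasure (volume.restrict K) k (t + 1)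
      {ω : (Fin k → Pt) × (Fin (t + 1) → PP) |
        ∀ s : Fin t, ω.2 s.castSucc ∉ sAcc K (pm (ω.2 (Fin.last t))) ∨
          dist (ω.1 i₀) (ω.2 s.castSucc).1 = dist (ω.1 i₀) (ω.2 s.castSucc).2}
      ≤ ∫⁻ p in K ×ˢ K, ENNReal.ofReal (Real.exp (-(t : ℝ) * f p)) := by
  classical
  haveI hμprob : IsProbabilityMeasure (volume.restrict K) :=
    ⟨by rw [Measure.restrict_apply_univ]; exact hKvol⟩
  set μ : Measure Pt := volume.restrict K with hμdef
  set ν : Measure PP := μ.prod μ with hνdef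
  haveI : IsProbabilityMeasure ν := by rw [hνdef]; infer_instance
  haveI : SigmaFinite ν := inferInstance
  haveI : SFinite (Measure.pi fun _ : Fin (t + 1) => ν) :=
    inferInstanceAs (SFinite (Measure.pi fun _ : Fin (t + 1) => ν))
  have hνr : ν = (volume : Measure PP).restrict (K ×ˢ K) := by
    rw [hνdef, hμdef, Measure.prod_restrict, ← Measure.volume_eq_prod]
  have hsm : ∀ p : PP, MeasurableSet (sAcc K (pm p)) := by
    intro p
    have h2 : Prod.mk p ⁻¹' {x : PP × PP | x.2 ∈ sAcc K (pm x.1)} = sAcc K (pm p) := rfl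
    rw [← h2]
    exact hjm.preimage measurable_prodMk_left
  set W : Set (Pt × (PP × PP)) := {y : Pt × (PP × PP) |
      y.2.2 ∉ sAcc K (pm y.2.1) ∨ dist y.1 y.2.2.1 = dist y.1 y.2.2.2} with hWdef
  have hW : MeasurableSet W := by
    have h1 : MeasurableSet {y : Pt × (PP × PP) | y.2.2 ∈ sAcc K (pm y.2.1)} :=
      hjm.preimage measurable_snd
    have h2 : MeasurableSet {y : Pt × (PP × PP) | dist y.1 y.2.2.1 = dist y.1 y.2.2.2} :=
      (isClosed_eq (continuous_fst.dist continuous_snd.snd.fst)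
        (continuous_fst.dist continuous_snd.snd.snd)).measurableSet
    have he : W = {y : Pt × (PP × PP) | y.2.2 ∈ sAcc K (pm y.2.1)}ᶜ ∪
        {y : Pt × (PP × PP) | dist y.1 y.2.2.1 = dist y.1 y.2.2.2} := rfl
    rw [he]
    exact h1.compl.union h2
  set U : Set ((Fin k → Pt) × (Fin (t + 1) → PP)) :=
    {ω : (Fin k → Pt) × (Fin (t + 1) → PP) |
      ∀ s : Fin t, ω.2 s.castSucc ∉ sAcc K (pm (ω.2 (Fin.last t))) ∨
        dist (ω.1 i₀) (ω.2 s.castSucc).1 = dist (ω.1 i₀) (ω.2 s.castSucc).2} with hUdef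
  have hUeq : U = ⋂ s : Fin t, (fun ω : (Fin k → Pt) × (Fin (t + 1) → PP) =>
      (ω.1 i₀, (ω.2 (Fin.last t), ω.2 s.castSucc))) ⁻¹' W := by
    ext ω
    simp only [hUdef, hWdef, mem_setOf_eq, mem_iInter, mem_preimage]
  have hUm : MeasurableSet U := by
    rw [hUeq]
    exact MeasurableSet.iInter fun s => hW.preimage
      (((measurable_pi_apply i₀).comp measurable_fst).prodMk
        (((measurable_pi_apply _).comp measurable_snd).prodMk
          ((measurable_pi_apply _).comp measurable_snd)))
  show procMeasure μ k (t + 1) U ≤ _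
  have hPdef : procMeasure μ k (t + 1) =
      (Measure.pi fun _ : Fin k => μ).prod (Measure.pi fun _ : Fin (t + 1) => ν) := rfl
  rw [hPdef, Measure.prod_apply hUm]
  have hinner : ∀ a : Fin k → Pt, (Measure.pi fun _ : Fin (t + 1) => ν)
      (Prod.mk a ⁻¹' U) ≤ ∫⁻ p, ENNReal.ofReal (Real.exp (-(t : ℝ) * f p)) ∂ν := by
    intro a
    set v₀ : Pt := a i₀ with hv₀'
    set U' : Set (PP × (Fin t → PP)) := {x : PP × (Fin t → PP) |
        ∀ s : Fin t, x.2 s ∉ sAcc K (pm x.1) ∨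
          dist v₀ (x.2 s).1 = dist v₀ (x.2 s).2} with hU'def
    have hU'm : MeasurableSet U' := by
      have he : U' = ⋂ s : Fin t,
          (fun x : PP × (Fin t → PP) => (v₀, (x.1, x.2 s))) ⁻¹' W := by
        ext x
        simp only [hU'def, hWdef, mem_setOf_eq, mem_iInter, mem_preimage]
      rw [he]
      exact MeasurableSet.iInter fun s => hW.preimage
        (measurable_const.prodMk (measurable_fst.prodMk
          ((measurable_pi_apply s).comp measurable_snd)))
    have hpre : Prod.mk a ⁻¹' U =
        (MeasurableEquiv.piFinSuccAbove (fun _ : Fin (t + 1) => PP) (Fin.last t)) ⁻¹' U' := by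
      ext c
      simp only [mem_preimage, MeasurableEquiv.piFinSuccAbove_apply, hU'def, hUdef,
        mem_setOf_eq, Fin.insertNthEquiv_symm_apply, Fin.removeNth,
        Fin.succAbove_last_apply, ← hv₀']
    have hmp := measurePreserving_piFinSuccAbove (fun _ : Fin (t + 1) => ν) (Fin.last t)
    rw [hpre, hmp.measure_preimage_equiv]
    rw [Measure.prod_apply hU'm]
    have hslice : ∀ p : PP, (Measure.pi fun _ : Fin t => ν) (Prod.mk p ⁻¹' U')
        = ν ((sAcc K (pm p))ᶜ ∪ {q : PP | dist v₀ q.1 = dist v₀ q.2}) ^ t := by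
      intro p
      have h1 : Prod.mk p ⁻¹' U' = Set.pi univ (fun _ : Fin t =>
          (sAcc K (pm p))ᶜ ∪ {q : PP | dist v₀ q.1 = dist v₀ q.2}) := by
        ext cs
        simp only [hU'def, mem_preimage, mem_setOf_eq, Set.mem_pi, mem_univ,
          forall_true_left, mem_union, mem_compl_iff]
      rw [h1, Measure.pi_pi, Finset.prod_const, Finset.card_univ, Fintype.card_fin]
    calc ∫⁻ p, (Measure.pi fun _ : Fin t => ν) (Prod.mk p ⁻¹' U') ∂ν
        = ∫⁻ p, ν ((sAcc K (pm p))ᶜ ∪ {q : PP | dist v₀ q.1 = dist v₀ q.2}) ^ t ∂ν :=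
          lintegral_congr hslice
      _ ≤ ∫⁻ p, ENNReal.ofReal (Real.exp (-(t : ℝ) * f p)) ∂ν := by
          refine lintegral_mono_ae ?_
          filter_upwards [hb] with p hp
          have hf1 : f p ≤ 1 := ENNReal.ofReal_le_one.mp (hp.trans prob_le_one)
          have h01 : (0 : ℝ) ≤ 1 - f p := by linarith
          have hA : ν ((sAcc K (pm p))ᶜ ∪ {q : PP | dist v₀ q.1 = dist v₀ q.2})
              ≤ 1 - ENNReal.ofReal (f p) := by
            calc ν ((sAcc K (pm p))ᶜ ∪ {q : PP | dist v₀ q.1 = dist v₀ q.2})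
                ≤ ν (sAcc K (pm p))ᶜ + ν {q : PP | dist v₀ q.1 = dist v₀ q.2} :=
                  measure_union_le _ _
              _ = (1 - ν (sAcc K (pm p))) + 0 := by
                  rw [prob_compl_eq_one_sub (hsm p)]
                  congr 1
                  rw [hνdef, hμdef]
                  exact nu_bis_null K v₀
              _ ≤ 1 - ENNReal.ofReal (f p) := by
                  rw [add_zero]
                  exact tsub_le_tsub_left hp 1
          calc ν ((sAcc K (pm p))ᶜ ∪ {q : PP | dist v₀ q.1 = dist v₀ q.2}) ^ t
              ≤ (1 - ENNReal.ofReal (f p)) ^ t := pow_le_pow_left' hA t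
            _ = ENNReal.ofReal ((1 - f p) ^ t) := by
                rw [ENNReal.ofReal_pow h01, ENNReal.ofReal_sub 1 (hfnonneg p),
                  ENNReal.ofReal_one]
            _ ≤ ENNReal.ofReal (Real.exp (-(t : ℝ) * f p)) := by
                apply ENNReal.ofReal_le_ofReal
                have h2 : 1 - f p ≤ Real.exp (-(f p)) := by
                  nlinarith [Real.add_one_le_exp (-(f p))]
                calc (1 - f p) ^ t ≤ Real.exp (-(f p)) ^ t := pow_le_pow_left₀ h01 h2 t
                  _ = Real.exp (-(t : ℝ) * f p) := by
                      rw [← Real.exp_nat_mul]; congr 1; ring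
  calc ∫⁻ a, (Measure.pi fun _ : Fin (t + 1) => ν) (Prod.mk a ⁻¹' U)
        ∂(Measure.pi fun _ : Fin k => μ)
      ≤ ∫⁻ _, (∫⁻ p, ENNReal.ofReal (Real.exp (-(t : ℝ) * f p)) ∂ν)
        ∂(Measure.pi fun _ : Fin k => μ) := lintegral_mono hinner
    _ = ∫⁻ p, ENNReal.ofReal (Real.exp (-(t : ℝ) * f p)) ∂ν := by
        rw [lintegral_const, measure_univ, mul_one]
    _ = ∫⁻ p in K ×ˢ K, ENNReal.ofReal (Real.exp (-(t : ℝ) * f p)) := by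
        rw [hνr]

/-- For the consensus-voting process on a convex compact `K ⊆ ℝ²` of
volume `1`: if a measurable nonnegative `f` satisfies
`f (w₁, w₂) ≤ min_{i} vol (E_K(Hᵢ(w₁,w₂), H₍₃₋ᵢ₎(w₁,w₂)))` for all `w₁ ≠ w₂` in `K`, then
the probability `Pr[X^{t+1}]` that a candidate is accepted in round `t+1` is at most
`2 ∫_K ∫_K e^{−t·f(w₁,w₂)} dw₁ dw₂`. -/
theorem prob_accept_le_two_mul_integral_exp
    (K : Set Pt) (hK : Convex ℝ K) (hKcomp : IsCompact K) (hKvol : volume K = 1)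
    (f : Pt × Pt → ℝ) (hfmeas : Measurable f) (hfnonneg : ∀ p, 0 ≤ f p)
    (hf : ∀ w₁ ∈ K, ∀ w₂ ∈ K, w₁ ≠ w₂ →
      ENNReal.ofReal (f (w₁, w₂)) ≤
          volume (accEvent K (vcell K w₁ w₂) (vcell K w₂ w₁)) ∧
        ENNReal.ofReal (f (w₁, w₂)) ≤
          volume (accEvent K (vcell K w₂ w₁) (vcell K w₁ w₂)))
    (k : ℕ) (hk : 1 ≤ k) (t : ℕ) (ht : 1 ≤ t) :
    procMeasure (volume.restrict K) k (t + 1)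
        {ω | Accepts (grp ω.1 (extSeq ω.2) t) (extSeq ω.2 t).1 (extSeq ω.2 t).2 ∨
             Accepts (grp ω.1 (extSeq ω.2) t) (extSeq ω.2 t).2 (extSeq ω.2 t).1}
      ≤ 2 * ∫⁻ p in K ×ˢ K, ENNReal.ofReal (Real.exp (-(t : ℝ) * f p)) := by
  classical
  haveI hμprob : IsProbabilityMeasure (volume.restrict K) :=
    ⟨by rw [Measure.restrict_apply_univ]; exact hKvol⟩
  have hKm : MeasurableSet K := hKcomp.isClosed.measurableSet
  set μ : Measure Pt := volume.restrict K with hμdef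
  set ν : Measure PP := μ.prod μ with hνdef
  haveI : IsProbabilityMeasure μ := hμprob
  haveI : IsProbabilityMeasure ν := by rw [hνdef]; infer_instance
  haveI : IsProbabilityMeasure (μ.prod μ) := by infer_instance
  haveI : SigmaFinite (μ.prod μ) := by infer_instance
  haveI : SFinite (Measure.pi fun _ : Fin (t + 1) => μ.prod μ) := by infer_instance
  have hνr : ν = (volume : Measure PP).restrict (K ×ˢ K) := by
    rw [hνdef, hμdef, Measure.prod_restrict, ← Measure.volume_eq_prod]
  set i₀ : Fin k := ⟨0, hk⟩ with hi₀
  -- joint measurability for both orientations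
  have hjm1 : MeasurableSet {x : PP × PP | x.2 ∈ sAcc K (id x.1)} :=
    measurableSet_sAcc_joint K hKcomp
  have hjm2 : MeasurableSet {x : PP × PP | x.2 ∈ sAcc K (Prod.swap x.1)} := by
    have he : {x : PP × PP | x.2 ∈ sAcc K (Prod.swap x.1)}
        = (fun x : PP × PP => (Prod.swap x.1, x.2)) ⁻¹' {x : PP × PP | x.2 ∈ sAcc K x.1} :=
      rfl
    rw [he]
    exact (measurableSet_sAcc_joint K hKcomp).preimage
      ((measurable_swap.comp measurable_fst).prodMk measurable_snd)
  have hsm : ∀ p : PP, MeasurableSet (sAcc K p) := by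
    intro p
    have h2 : Prod.mk p ⁻¹' {x : PP × PP | x.2 ∈ sAcc K (id x.1)} = sAcc K p := rfl
    rw [← h2]
    exact hjm1.preimage measurable_prodMk_left
  -- a.e. facts
  have haeK : ∀ᵐ p ∂ν, p ∈ K ×ˢ K := by
    rw [hνr]; exact ae_restrict_mem (hKm.prod hKm)
  have haene : ∀ᵐ p ∂ν, p.1 ≠ p.2 := by
    rw [ae_iff]
    have h0 : ν {q : PP | q.1 = q.2} = 0 := by
      rw [hνdef, hμdef]; exact nu_diag_null K
    simpa [not_not] using h0
  -- the a.e. lower bounds on the strict acceptance events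
  have hb1 : ∀ᵐ p ∂ν, ENNReal.ofReal (f p) ≤ ν (sAcc K (id p)) := by
    filter_upwards [haeK, haene] with p hpK hpne
    have h1 : p.1 ∈ K := hpK.1
    have h2 : p.2 ∈ K := hpK.2
    have hhf := (hf p.1 h1 p.2 h2 hpne).2
    have hfp : ENNReal.ofReal (f p) = ENNReal.ofReal (f (p.1, p.2)) := by
      rw [Prod.mk.eta]
    rw [hfp]
    refine hhf.trans ?_
    rw [hνdef, hμdef]
    exact acc_le_sAcc K p hpne (hsm p)
  have hb2 : ∀ᵐ p ∂ν, ENNReal.ofReal (f p) ≤ ν (sAcc K (Prod.swap p)) := by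
    filter_upwards [haeK, haene] with p hpK hpne
    have h1 : p.1 ∈ K := hpK.1
    have h2 : p.2 ∈ K := hpK.2
    have hhf := (hf p.1 h1 p.2 h2 hpne).1
    have hfp : ENNReal.ofReal (f p) = ENNReal.ofReal (f (p.1, p.2)) := by
      rw [Prod.mk.eta]
    rw [hfp]
    refine hhf.trans ?_
    rw [hνdef, hμdef]
    exact acc_le_sAcc K (p.2, p.1) (fun h => hpne h.symm) (hsm (p.2, p.1))
  -- the good event Ω
  set Ω : Set ((Fin k → Pt) × (Fin (t + 1) → PP)) :=
    {ω | (∀ i, ω.1 i ∈ K) ∧ ∀ n : Fin (t + 1), (ω.2 n).1 ∈ K ∧ (ω.2 n).2 ∈ K} with hΩdef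
  have hμc : μ Kᶜ = 0 := by
    rw [hμdef, Measure.restrict_apply hKm.compl, compl_inter_self, measure_empty]
  have hνc : ν (K ×ˢ K)ᶜ = 0 := by
    rw [hνr, Measure.restrict_apply (hKm.prod hKm).compl, compl_inter_self, measure_empty]
  have hΩnull : procMeasure μ k (t + 1) Ωᶜ = 0 := by
    have hP1 : ∀ i : Fin k, procMeasure μ k (t + 1) {ω : (Fin k → Pt) × (Fin (t + 1) → PP) |
        ω.1 i ∈ Kᶜ} = 0 := by
      intro i
      have he : {ω : (Fin k → Pt) × (Fin (t + 1) → PP) | ω.1 i ∈ Kᶜ}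
          = {a : Fin k → Pt | a i ∈ Kᶜ} ×ˢ (univ : Set (Fin (t + 1) → PP)) := by
        ext ω; simp [Set.mem_prod]
      rw [procMeasure, he, Measure.prod_prod, pi_null μ hμc i, zero_mul]
    have hP2 : ∀ n : Fin (t + 1), procMeasure μ k (t + 1)
        {ω : (Fin k → Pt) × (Fin (t + 1) → PP) | ω.2 n ∈ (K ×ˢ K)ᶜ} = 0 := by
      intro n
      have he : {ω : (Fin k → Pt) × (Fin (t + 1) → PP) | ω.2 n ∈ (K ×ˢ K)ᶜ}
          = (univ : Set (Fin k → Pt)) ×ˢ {c : Fin (t + 1) → PP | c n ∈ (K ×ˢ K)ᶜ} := by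
        ext ω; simp [Set.mem_prod]
      rw [procMeasure, he, Measure.prod_prod, pi_null (μ.prod μ) (by
        rw [← hνdef]; exact hνc) n, measure_univ, one_mul]
    have hsub : Ωᶜ ⊆ (⋃ i : Fin k, {ω : (Fin k → Pt) × (Fin (t + 1) → PP) | ω.1 i ∈ Kᶜ}) ∪
        ⋃ n : Fin (t + 1), {ω : (Fin k → Pt) × (Fin (t + 1) → PP) | ω.2 n ∈ (K ×ˢ K)ᶜ} := by
      intro ω hω
      simp only [hΩdef, mem_compl_iff, mem_setOf_eq, not_and_or, not_forall] at hω
      rcases hω with h | h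
      · obtain ⟨i, hi⟩ := h
        exact Or.inl (mem_iUnion.mpr ⟨i, hi⟩)
      · obtain ⟨n, hn⟩ := h
        refine Or.inr (mem_iUnion.mpr ⟨n, ?_⟩)
        intro hmem
        rcases hn with h | h
        · exact h hmem.1
        · exact h hmem.2
    refine measure_mono_null hsub (measure_union_null ?_ ?_)
    · exact measure_iUnion_null fun i => hP1 i
    · exact measure_iUnion_null fun n => hP2 n
  -- the two avoidance events
  set U1 : Set ((Fin k → Pt) × (Fin (t + 1) → PP)) :=
    {ω : (Fin k → Pt) × (Fin (t + 1) → PP) |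
      ∀ s : Fin t, ω.2 s.castSucc ∉ sAcc K (id (ω.2 (Fin.last t))) ∨
        dist (ω.1 i₀) (ω.2 s.castSucc).1 = dist (ω.1 i₀) (ω.2 s.castSucc).2} with hU1def
  set U2 : Set ((Fin k → Pt) × (Fin (t + 1) → PP)) :=
    {ω : (Fin k → Pt) × (Fin (t + 1) → PP) |
      ∀ s : Fin t, ω.2 s.castSucc ∉ sAcc K (Prod.swap (ω.2 (Fin.last t))) ∨
        dist (ω.1 i₀) (ω.2 s.castSucc).1 = dist (ω.1 i₀) (ω.2 s.castSucc).2} with hU2def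
  have hkey1 : procMeasure μ k (t + 1) U1
      ≤ ∫⁻ p in K ×ˢ K, ENNReal.ofReal (Real.exp (-(t : ℝ) * f p)) :=
    key_bound K hKcomp hKvol f hfnonneg i₀ id hjm1 hb1
  have hkey2 : procMeasure μ k (t + 1) U2
      ≤ ∫⁻ p in K ×ˢ K, ENNReal.ofReal (Real.exp (-(t : ℝ) * f p)) :=
    key_bound K hKcomp hKvol f hfnonneg i₀ Prod.swap hjm2 hb2
  -- inclusion of the target event
  have hincl : {ω : (Fin k → Pt) × (Fin (t + 1) → PP) |
      Accepts (grp ω.1 (extSeq ω.2) t) (extSeq ω.2 t).1 (extSeq ω.2 t).2 ∨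
      Accepts (grp ω.1 (extSeq ω.2) t) (extSeq ω.2 t).2 (extSeq ω.2 t).1}
      ⊆ Ωᶜ ∪ (U1 ∪ U2) := by
    intro ω hω
    by_cases hΩω : ω ∈ Ω
    · right
      obtain ⟨ha, hcpair⟩ := hΩω
      have hc : ∀ n, n < t → (extSeq ω.2 n).1 ∈ K ∧ (extSeq ω.2 n).2 ∈ K := by
        intro n hn
        have hlt : n < t + 1 := Nat.lt_succ_of_lt hn
        have he : extSeq ω.2 n = ω.2 ⟨n, hlt⟩ := dif_pos hlt
        rw [he]
        exact hcpair _
      rcases hω with hAcc | hAcc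
      · left
        intro s
        have hcl := claimA K ω.1 (extSeq ω.2) t ha hc
          (extSeq ω.2 t).1 (extSeq ω.2 t).2 hAcc i₀ ↑s s.isLt
        rw [extSeq_castSucc, extSeq_last] at hcl
        simpa using hcl
      · right
        intro s
        have hcl := claimA K ω.1 (extSeq ω.2) t ha hc
          (extSeq ω.2 t).2 (extSeq ω.2 t).1 hAcc i₀ ↑s s.isLt
        rw [extSeq_castSucc, extSeq_last] at hcl
        simpa [Prod.swap] using hcl
    · exact Or.inl hΩω
  refine le_trans (measure_mono hincl) ?_
  refine le_trans (measure_union_le _ _) ?_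
  refine le_trans (add_le_add hΩnull.le (measure_union_le _ _)) ?_
  refine le_trans (add_le_add le_rfl (add_le_add hkey1 hkey2)) ?_
  rw [zero_add, two_mul]

end
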